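/- There is no 4-stage explicit Runge–Kutta method satisfying simultaneously the eight fourth-order order conditions together with the three equilibrium-preservation conditions a_{2,1}c₁ = c₂²/2, a_{3,1}c₁ + a_{3,2}c₂ = c₃²/2, and a_{3,2}a_{2,1}c₁ = c₃³/6, where c₄ = 1 and c_i = Σ_{j<i} a_{i,j}. (In particular, for the classical consistency abscissas, the combined system of 11 polynomial constraints in the 10 free parameters has no solution.) -/
import Mathlib


/-- There is no 4-stage explicit Runge–Kutta method satisfying simultaneously the
eight fourth-order order conditions together with the three equilibrium-preservation
conditions a₂₁c₁ = c₂²/2, a₃₁c₁ + a₃₂c₂ = c₃²/2 and a₃₂a₂₁c₁ = c₃³/6, where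
c_i = Σ_{j<i} a_{i,j}, c₄ = 1 and b = (a₄₀, a₄₁, a₄₂, a₄₃). -/
theorem stmt_5 :
    ¬ ∃ a10 a20 a21 a30 a31 a32 b0 b1 b2 b3 : ℝ,
      let c1 := a10
      let c2 := a20 + a21
      let c3 := a30 + a31 + a32
      -- consistency: c₄ = b0 + b1 + b2 + b3 = 1 coincides with the first order condition
      (b0 + b1 + b2 + b3 = 1) ∧
      (b1 * c1 + b2 * c2 + b3 * c3 = 1 / 2) ∧
      (b1 * c1 ^ 2 + b2 * c2 ^ 2 + b3 * c3 ^ 2 = 1 / 3) ∧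
      (b2 * (a21 * c1) + b3 * (a31 * c1 + a32 * c2) = 1 / 6) ∧
      (b1 * c1 ^ 3 + b2 * c2 ^ 3 + b3 * c3 ^ 3 = 1 / 4) ∧
      (b2 * c2 * (a21 * c1) + b3 * c3 * (a31 * c1 + a32 * c2) = 1 / 8) ∧
      (b2 * (a21 * c1 ^ 2) + b3 * (a31 * c1 ^ 2 + a32 * c2 ^ 2) = 1 / 12) ∧
      (b3 * (a32 * (a21 * c1)) = 1 / 24) ∧
      (a21 * c1 = c2 ^ 2 / 2) ∧
      (a31 * c1 + a32 * c2 = c3 ^ 2 / 2) ∧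
      (a32 * (a21 * c1) = c3 ^ 3 / 6) := by
  rintro ⟨a10, a20, a21, a30, a31, a32, b0, b1, b2, b3,
    h1, h2, h3, h4, h5, h6, h7, h8, e1, e2, e3⟩
  set c1 := a10 with hc1
  set c2 := a20 + a21 with hc2
  set c3 := a30 + a31 + a32 with hc3
  -- a21*c1 ≠ 0
  have hac : a21 * c1 ≠ 0 := by
    intro h0
    rw [h0] at h8
    norm_num at h8
  have hc1ne : c1 ≠ 0 := right_ne_zero_of_mul hac
  have hc2ne : c2 ≠ 0 := by
    intro h0
    rw [h0] at e1
    norm_num at e1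
    exact hac (mul_eq_zero.mpr e1)
  -- b3 * c3^3 = 1/4
  have hC : b3 * c3 ^ 3 = 1 / 4 := by
    have := h8
    rw [e3] at this
    linarith
  -- b1 = 0
  have hb1 : b1 = 0 := by
    have h4' : b2 * c2 ^ 2 + b3 * c3 ^ 2 = 1 / 3 := by
      rw [e1, e2] at h4; linarith
    have : b1 * c1 ^ 2 = 0 := by linarith
    have := mul_eq_zero.mp this
    rcases this with h | h
    · exact h
    · exact absurd (pow_eq_zero_iff (n := 2) (by norm_num) |>.mp h) hc1ne
  -- b2 = 0
  have hb2 : b2 = 0 := by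
    have h6' : b2 * c2 ^ 3 + b3 * c3 ^ 3 = 1 / 4 := by
      rw [e1, e2] at h6; linear_combination 2 * h6
    have : b2 * c2 ^ 3 = 0 := by
      rw [hb1] at h5; linear_combination h5 - hC
    rcases mul_eq_zero.mp this with h | h
    · exact h
    · exact absurd (pow_eq_zero_iff (n := 3) (by norm_num) |>.mp h) hc2ne
  have hA : b3 * c3 = 1 / 2 := by rw [hb1, hb2] at h2; linarith
  have hB : b3 * c3 ^ 2 = 1 / 3 := by rw [hb1, hb2] at h3; linarith
  have : (1 : ℝ) / 8 = 1 / 9 := by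
    linear_combination (-(b3 * c3 ^ 3)) * hA + (b3 * c3 ^ 2 + 1 / 3) * hB + (-(1 : ℝ) / 2) * hC
  norm_num at this
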